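/- arXiv:1001.5329 — 4 statements merged into one kernel-verified Lean document; each statement's English description precedes it below -/
import Mathlib

section
/- Let γ ∈ (1,2], λ > 0, and let κ(s) solve κ(0)=0, κ'(s) = λ − κ(s)^γ. Then lim_{λ→0+} κ(a)/λ = a for each fixed a > 0. -/
open Real Set Filter Topology

/-- If for each `λ > 0`, `κ_λ` is a nonnegative solution of `κ(0)=0`, `κ' = λ − κ^γ`,
then `κ_λ(a)/λ → a` as `λ → 0+`. -/
theorem stmt_9 (γ : ℝ) (hγ₁ : 1 < γ) (hγ₂ : γ ≤ 2) (a : ℝ) (ha : 0 < a)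
    (κ : ℝ → ℝ → ℝ)
    (hκ0 : ∀ l : ℝ, 0 < l → κ l 0 = 0)
    (hκ' : ∀ l : ℝ, 0 < l → ∀ s, 0 ≤ s →
      HasDerivWithinAt (κ l) (l - κ l s ^ γ) (Ici 0) s)
    (hκpos : ∀ l : ℝ, 0 < l → ∀ s, 0 ≤ s → 0 ≤ κ l s) :
    Tendsto (fun l : ℝ => κ l a / l) (𝓝[>] (0 : ℝ)) (𝓝 a) := by
  have hIci : Convex ℝ (Ici (0:ℝ)) := convex_Ici 0
  have hint : interior (Ici (0:ℝ)) = Ioi 0 := interior_Ici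
  -- continuity of κ l on Ici 0
  have hcont : ∀ l : ℝ, 0 < l → ContinuousOn (κ l) (Ici 0) := fun l hl x hx =>
    (hκ' l hl x hx).continuousWithinAt
  -- Step 1: upper bound κ l s ≤ l * s
  have hub : ∀ l : ℝ, 0 < l → ∀ s, 0 ≤ s → κ l s ≤ l * s := by
    intro l hl s hs
    have hmono : MonotoneOn (fun t => l * t - κ l t) (Ici 0) := by
      apply monotoneOn_of_hasDerivWithinAt_nonneg hIci
        (f' := fun t => κ l t ^ γ)
      · exact (continuousOn_const.mul continuousOn_id).sub (hcont l hl)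
      · intro x hx
        rw [hint] at hx
        have h1 : HasDerivWithinAt (fun t => l * t - κ l t) (l * 1 - (l - κ l x ^ γ))
            (Ici 0) x := ((hasDerivAt_id x).const_mul l).hasDerivWithinAt.sub
              (hκ' l hl x (le_of_lt hx))
        rw [hint]
        have := h1.mono (Ioi_subset_Ici le_rfl)
        exact this.congr_deriv (by ring)
      · intro x hx
        rw [hint] at hx
        exact rpow_nonneg (hκpos l hl x (le_of_lt hx)) γ
    have := hmono (self_mem_Ici) hs hs
    simp [hκ0 l hl] at this
    linarith
  -- Step 2: lower bound
  have hlb : ∀ l : ℝ, 0 < l → l * a - l ^ γ * a ^ (γ + 1) / (γ + 1) ≤ κ l a := by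
    intro l hl
    have hmono : MonotoneOn
        (fun t => κ l t - (l * t - l ^ γ * t ^ (γ + 1) / (γ + 1))) (Ici 0) := by
      apply monotoneOn_of_hasDerivWithinAt_nonneg hIci
        (f' := fun t => l ^ γ * t ^ γ - κ l t ^ γ)
      · apply (hcont l hl).sub
        apply ContinuousOn.sub (continuousOn_const.mul continuousOn_id)
        exact ((continuousOn_const.mul
          ((continuousOn_id.rpow_const (fun x _ => Or.inr (by linarith))))).div_const _)
      · intro x hx
        rw [hint] at hx ⊢
        have hp : HasDerivAt (fun t : ℝ => t ^ (γ + 1)) ((γ + 1) * x ^ γ) x := by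
          have := Real.hasDerivAt_rpow_const (x := x) (p := γ + 1)
            (Or.inr (by linarith))
          simpa using this
        have h2 : HasDerivAt (fun t => l * t - l ^ γ * t ^ (γ + 1) / (γ + 1))
            (l * 1 - l ^ γ * ((γ + 1) * x ^ γ) / (γ + 1)) x :=
          ((hasDerivAt_id x).const_mul l).sub ((hp.const_mul (l ^ γ)).div_const (γ + 1))
        have h3 : HasDerivWithinAt
            (fun t => κ l t - (l * t - l ^ γ * t ^ (γ + 1) / (γ + 1)))
            ((l - κ l x ^ γ) - (l * 1 - l ^ γ * ((γ + 1) * x ^ γ) / (γ + 1))) (Ici 0) x :=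
          (hκ' l hl x (le_of_lt hx)).sub h2.hasDerivWithinAt
        have := h3.mono (Ioi_subset_Ici le_rfl)
        refine this.congr_deriv ?_
        rw [mul_comm (γ + 1), ← mul_assoc, mul_div_cancel_right₀ _ (show γ + 1 ≠ 0 by linarith)]
        ring
      · intro x hx
        rw [hint] at hx
        have hκle : κ l x ≤ l * x := hub l hl x (le_of_lt hx)
        have : κ l x ^ γ ≤ (l * x) ^ γ :=
          rpow_le_rpow (hκpos l hl x (le_of_lt hx)) hκle (by linarith)
        rw [mul_rpow hl.le (le_of_lt hx)] at this
        linarith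
    have := hmono (self_mem_Ici) (le_of_lt ha) (le_of_lt ha)
    simp [hκ0 l hl, Real.zero_rpow (show (γ:ℝ) + 1 ≠ 0 by linarith)] at this
    linarith
  -- Squeeze
  have hU : ∀ᶠ l in 𝓝[>] (0:ℝ), κ l a / l ≤ a := by
    filter_upwards [self_mem_nhdsWithin] with l hl
    have hl : (0:ℝ) < l := hl
    rw [div_le_iff₀ hl]
    have := hub l hl a ha.le
    linarith [this]
  have hL : ∀ᶠ l in 𝓝[>] (0:ℝ),
      a - l ^ (γ - 1) * a ^ (γ + 1) / (γ + 1) ≤ κ l a / l := by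
    filter_upwards [self_mem_nhdsWithin] with l hl
    have hl : (0:ℝ) < l := hl
    rw [le_div_iff₀ hl]
    have h := hlb l hl
    have hg : l ^ γ = l ^ (γ - 1) * l := by
      rw [← Real.rpow_add_one hl.ne' (γ - 1)]; ring_nf
    calc (a - l ^ (γ - 1) * a ^ (γ + 1) / (γ + 1)) * l
        = l * a - l ^ γ * a ^ (γ + 1) / (γ + 1) := by rw [hg]; ring
      _ ≤ κ l a := h
  have hlow : Tendsto (fun l : ℝ => a - l ^ (γ - 1) * a ^ (γ + 1) / (γ + 1))
      (𝓝[>] (0:ℝ)) (𝓝 a) := by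
    have h1 : Tendsto (fun l : ℝ => l ^ (γ - 1)) (𝓝[>] (0:ℝ)) (𝓝 0) := by
      have := (Real.continuousAt_rpow_const 0 (γ - 1)
        (Or.inr (by linarith))).tendsto
      rw [Real.zero_rpow (by linarith : γ - 1 ≠ 0)] at this
      exact this.mono_left nhdsWithin_le_nhds
    have : Tendsto (fun l : ℝ => a - l ^ (γ - 1) * a ^ (γ + 1) / (γ + 1))
        (𝓝[>] (0:ℝ)) (𝓝 (a - 0 * a ^ (γ + 1) / (γ + 1))) :=
      tendsto_const_nhds.sub ((h1.mul tendsto_const_nhds).div_const _)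
    simpa using this
  exact tendsto_of_tendsto_of_tendsto_of_le_of_le' hlow tendsto_const_nhds hL hU
end

section
/- Let γ ∈ (1,2) and let G(λ) = 1 − κ_1(λ,0)^γ/λ, where κ_s(λ,0) solves κ'=λ−κ^γ, κ(0)=0. Then as λ → 0+, G(λ) = 1 − λ^{γ−1} + o(λ^{γ−1}). -/
open Real Set Filter Topology Asymptotics

/-- With `κ_λ` the solution of `κ(0)=0`, `κ' = λ − κ^γ`, the function
`G(λ) = 1 − κ_λ(1)^γ/λ` satisfies `G(λ) = 1 − λ^{γ−1} + o(λ^{γ−1})` as `λ → 0+`. -/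
theorem stmt_10 (γ : ℝ) (hγ₁ : 1 < γ) (hγ₂ : γ < 2)
    (κ : ℝ → ℝ → ℝ)
    (hκ0 : ∀ l : ℝ, 0 < l → κ l 0 = 0)
    (hκ' : ∀ l : ℝ, 0 < l → ∀ s, 0 ≤ s →
      HasDerivWithinAt (κ l) (l - κ l s ^ γ) (Ici 0) s)
    (hκpos : ∀ l : ℝ, 0 < l → ∀ s, 0 ≤ s → 0 ≤ κ l s)
    (G : ℝ → ℝ) (hG : ∀ l : ℝ, 0 < l → G l = 1 - κ l 1 ^ γ / l) :
    (fun l : ℝ => G l - (1 - l ^ (γ - 1)))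
      =o[𝓝[>] (0 : ℝ)] (fun l : ℝ => l ^ (γ - 1)) := by
  have hγ0 : (0:ℝ) < γ := by linarith
  have hγ1pos : (0:ℝ) < γ + 1 := by linarith
  -- continuity of κ l on Icc 0 1
  have hcont : ∀ l : ℝ, 0 < l → ContinuousOn (κ l) (Icc (0:ℝ) 1) := by
    intro l hl s hs
    exact ((hκ' l hl s hs.1).continuousWithinAt).mono (fun x hx => hx.1)
  -- upper bound: κ l s ≤ l * s on [0,1]
  have hupper : ∀ l : ℝ, 0 < l → ∀ s ∈ Icc (0:ℝ) 1, κ l s ≤ l * s := by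
    intro l hl s hs
    have hmono : MonotoneOn (fun s => l * s - κ l s) (Icc (0:ℝ) 1) := by
      have hderiv : ∀ x ∈ Ioo (0:ℝ) 1,
          HasDerivAt (fun s => l * s - κ l s) (κ l x ^ γ) x := by
        intro x hx
        have h1 : HasDerivAt (fun s : ℝ => l * s) l x := by
          simpa using (hasDerivAt_id x).const_mul l
        have h2 : HasDerivAt (κ l) (l - κ l x ^ γ) x :=
          (hκ' l hl x hx.1.le).hasDerivAt (Ici_mem_nhds hx.1)
        have h := h1.sub h2
        simp only [sub_sub_cancel] at h
        exact h
      apply monotoneOn_of_deriv_nonneg (convex_Icc 0 1)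
      · exact (continuousOn_const.mul continuousOn_id).sub (hcont l hl)
      · intro x hx
        rw [interior_Icc] at hx
        exact (hderiv x hx).differentiableAt.differentiableWithinAt
      · intro x hx
        rw [interior_Icc] at hx
        rw [(hderiv x hx).deriv]
        exact Real.rpow_nonneg (hκpos l hl x hx.1.le) γ
    have := hmono (left_mem_Icc.mpr one_pos.le) hs hs.1
    simp only [mul_zero, hκ0 l hl, sub_zero] at this
    linarith
  -- lower bound: κ l 1 ≥ l - l^γ/(γ+1)
  have hlower : ∀ l : ℝ, 0 < l → l - l ^ γ / (γ + 1) ≤ κ l 1 := by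
    intro l hl
    have hmono : MonotoneOn
        (fun s => κ l s - l * s + l ^ γ * s ^ (γ + 1) / (γ + 1)) (Icc (0:ℝ) 1) := by
      have hderiv : ∀ x ∈ Ioo (0:ℝ) 1,
          HasDerivAt (fun s => κ l s - l * s + l ^ γ * s ^ (γ + 1) / (γ + 1))
            (l ^ γ * x ^ γ - κ l x ^ γ) x := by
        intro x hx
        have h1 : HasDerivAt (fun s : ℝ => l * s) l x := by
          simpa using (hasDerivAt_id x).const_mul l
        have h2 : HasDerivAt (κ l) (l - κ l x ^ γ) x :=
          (hκ' l hl x hx.1.le).hasDerivAt (Ici_mem_nhds hx.1)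
        have h3 : HasDerivAt (fun s : ℝ => s ^ (γ + 1)) ((γ + 1) * x ^ γ) x := by
          have := Real.hasDerivAt_rpow_const (x := x) (p := γ + 1)
            (Or.inr (by linarith))
          simpa using this
        have h4 : HasDerivAt (fun s : ℝ => l ^ γ * s ^ (γ + 1) / (γ + 1))
            (l ^ γ * ((γ + 1) * x ^ γ) / (γ + 1)) x := (h3.const_mul (l ^ γ)).div_const _
        have := (h2.sub h1).add h4
        rw [mul_div_assoc, mul_div_cancel_left₀ _ hγ1pos.ne'] at this
        exact this.congr_deriv (by ring)
      apply monotoneOn_of_deriv_nonneg (convex_Icc 0 1)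
      · refine ((hcont l hl).sub (continuousOn_const.mul continuousOn_id)).add ?_
        refine ContinuousOn.div_const (continuousOn_const.mul ?_) _
        intro x hx
        exact (Real.continuousAt_rpow_const x (γ + 1)
          (Or.inr hγ1pos.le)).continuousWithinAt
      · intro x hx
        rw [interior_Icc] at hx
        exact (hderiv x hx).differentiableAt.differentiableWithinAt
      · intro x hx
        rw [interior_Icc] at hx
        rw [(hderiv x hx).deriv]
        have hk : κ l x ≤ l * x := hupper l hl x ⟨hx.1.le, hx.2.le⟩
        have : κ l x ^ γ ≤ (l * x) ^ γ :=
          Real.rpow_le_rpow (hκpos l hl x hx.1.le) hk hγ0.le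
        rw [Real.mul_rpow hl.le hx.1.le] at this
        linarith
    have h01 := hmono (left_mem_Icc.mpr one_pos.le) (right_mem_Icc.mpr one_pos.le)
      one_pos.le
    have hz : (0:ℝ) ^ (γ + 1) = 0 := Real.zero_rpow (by positivity)
    have ho : (1:ℝ) ^ (γ + 1) = 1 := Real.one_rpow _
    simp only [hκ0 l hl, mul_zero, mul_one, hz, ho, sub_zero, zero_add] at h01
    have : (0:ℝ) ≤ κ l 1 - l + l ^ γ / (γ + 1) := by
      simpa using h01
    linarith
  -- the ratio κ l 1 / l tends to 1
  have hrpow0 : Tendsto (fun l : ℝ => l ^ (γ - 1)) (𝓝[>] 0) (𝓝 0) := by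
    have h := (Real.continuousAt_rpow_const 0 (γ - 1)
      (Or.inr (by linarith))).continuousWithinAt (s := Ioi (0:ℝ))
    have h0 : (0:ℝ) ^ (γ - 1) = 0 := Real.zero_rpow (by linarith)
    rw [ContinuousWithinAt, h0] at h
    exact h
  have hratio : Tendsto (fun l : ℝ => κ l 1 / l) (𝓝[>] 0) (𝓝 1) := by
    apply tendsto_of_tendsto_of_tendsto_of_le_of_le'
      (g := fun l : ℝ => 1 - l ^ (γ - 1) / (γ + 1)) (h := fun _ : ℝ => (1:ℝ))
    · have : Tendsto (fun l : ℝ => l ^ (γ - 1) / (γ + 1)) (𝓝[>] 0) (𝓝 0) := by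
        simpa using hrpow0.div_const (γ + 1)
      simpa using tendsto_const_nhds.sub this
    · exact tendsto_const_nhds
    · filter_upwards [self_mem_nhdsWithin] with l hl
      have hl' : (0:ℝ) < l := hl
      have hx : l ^ (γ - 1) * l = l ^ γ := by
        rw [← Real.rpow_add_one hl'.ne' (γ - 1)]; norm_num
      rw [le_div_iff₀ hl']
      have heq : (1 - l ^ (γ - 1) / (γ + 1)) * l = l - l ^ γ / (γ + 1) := by
        rw [← hx]; field_simp
      rw [heq]
      exact hlower l hl'
    · filter_upwards [self_mem_nhdsWithin] with l hl
      have hl' : (0:ℝ) < l := hl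
      rw [div_le_one hl']
      simpa using hupper l hl' 1 (right_mem_Icc.mpr one_pos.le)
  have key2 : Tendsto (fun l : ℝ => 1 - (κ l 1 / l) ^ γ) (𝓝[>] 0) (𝓝 0) := by
    have h := hratio.rpow_const (Or.inr hγ0.le)
    rw [Real.one_rpow] at h
    simpa using (tendsto_const_nhds (x := (1:ℝ))).sub h
  have main : (fun l : ℝ => (1 - (κ l 1 / l) ^ γ) * l ^ (γ - 1))
      =o[𝓝[>] (0:ℝ)] (fun l : ℝ => (1:ℝ) * l ^ (γ - 1)) :=
    ((isLittleO_one_iff ℝ).mpr key2).mul_isBigO (isBigO_refl _ _)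
  refine main.congr' ?_ ?_
  · filter_upwards [self_mem_nhdsWithin] with l hl
    have hl' : (0:ℝ) < l := hl
    have hlne : l ≠ 0 := hl'.ne'
    have hx : l ^ (γ - 1) * l = l ^ γ := by
      rw [← Real.rpow_add_one hlne (γ - 1)]; norm_num
    have h2 : (κ l 1 / l) ^ γ = κ l 1 ^ γ / l ^ γ :=
      Real.div_rpow (hκpos l hl' 1 one_pos.le) hl'.le γ
    rw [hG l hl', h2, ← hx]
    have hpow : l ^ (γ - 1) ≠ 0 := (Real.rpow_pos_of_pos hl' _).ne'
    field_simp
    ring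
  · filter_upwards with l
    rw [one_mul]
end

section
/- Let γ ∈ (1,2], a > 0 and 0 ≤ k < l integers. For all λ > 0, the function ψ_{k,l}(λ) = ((½(γ−1)2^{−(l−k)}λ^{γ−1}+1)/(½(γ−1)λ^{γ−1}+1))^{γ/(γ−1)} satisfies ψ_{k,l}(λ) ≤ C₁(2^{−(l−k)γ/(γ−1)} + λ^{−γ}), where C₁ = 2^{1/(γ−1)}(2/(γ−1))^{γ/(γ−1)}. -/
open Real

private lemma aux_pow_add {a b p : ℝ} (ha : 0 ≤ a) (hb : 0 ≤ b) (hp : 1 ≤ p) :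
    (a + b) ^ p ≤ 2 ^ (p - 1) * (a ^ p + b ^ p) := by
  lift a to NNReal using ha
  lift b to NNReal using hb
  exact_mod_cast NNReal.rpow_add_le_mul_rpow_add_rpow a b hp

/-- Bound on the Laplace transform `ψ_{k,l}` of `2^{k/(γ−1)}Λ_{2^{−l},2^{−k}}(a)`:
`ψ_{k,l}(λ) ≤ C₁(2^{−(l−k)γ/(γ−1)} + λ^{−γ})` with
`C₁ = 2^{1/(γ−1)}(2/(γ−1))^{γ/(γ−1)}`. -/
theorem stmt_12 (γ : ℝ) (hγ₁ : 1 < γ) (hγ₂ : γ ≤ 2) (a : ℝ) (ha : 0 < a)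
    (k l : ℕ) (hkl : k < l) :
    ∀ lam : ℝ, 0 < lam →
      (((γ - 1) / 2 * 2 ^ (-((l : ℝ) - k)) * lam ^ (γ - 1) + 1) /
          ((γ - 1) / 2 * lam ^ (γ - 1) + 1)) ^ (γ / (γ - 1)) ≤
        2 ^ (1 / (γ - 1)) * (2 / (γ - 1)) ^ (γ / (γ - 1)) *
          (2 ^ (-(γ / (γ - 1)) * ((l : ℝ) - k)) + lam ^ (-γ)) := by
  intro lam hlam
  set β : ℝ := γ - 1 with hβ
  have hβ0 : 0 < β := by simp only [hβ]; linarith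
  have hβ1 : β ≤ 1 := by simp only [hβ]; linarith
  set p : ℝ := γ / β with hp
  have hγ0 : 0 < γ := by linarith
  have hp1 : 1 < p := by
    rw [hp, lt_div_iff₀ hβ0]
    simp only [hβ, one_mul]; linarith
  set t : ℝ := lam ^ β with ht
  have ht0 : 0 < t := rpow_pos_of_pos hlam β
  set c : ℝ := (2 : ℝ) ^ (-((l : ℝ) - k)) with hc
  have hc0 : 0 < c := rpow_pos_of_pos two_pos _
  have hden : 0 < β / 2 * t + 1 := by positivity
  set d : ℝ := 2 / β * t⁻¹ with hd
  have hd0 : 0 < d := by positivity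
  -- Step 1: ratio ≤ c + d
  have hratio : (β / 2 * c * t + 1) / (β / 2 * t + 1) ≤ c + d := by
    rw [div_le_iff₀ hden]
    have h2 : d * (β / 2 * t) = 1 := by
      rw [hd]; field_simp
    nlinarith [mul_pos hc0 hden, hd0]
  have hratio0 : 0 ≤ (β / 2 * c * t + 1) / (β / 2 * t + 1) := by positivity
  have step2 : ((β / 2 * c * t + 1) / (β / 2 * t + 1)) ^ p ≤ (c + d) ^ p :=
    rpow_le_rpow hratio0 hratio (by linarith)
  have step3 : (c + d) ^ p ≤ 2 ^ (p - 1) * (c ^ p + d ^ p) :=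
    aux_pow_add hc0.le hd0.le hp1.le
  -- identities
  have hβp : β * p = γ := by
    rw [hp]; field_simp
  have hdp : d ^ p = (2 / β) ^ p * lam ^ (-γ) := by
    rw [hd, mul_rpow (by positivity) (by positivity)]
    congr 1
    have h1 : t⁻¹ = lam ^ (-β) := by rw [ht, ← rpow_neg hlam.le]
    rw [h1, ← rpow_mul hlam.le]
    congr 1
    rw [neg_mul, hβp]
  have hcp : c ^ p = (2 : ℝ) ^ (-p * ((l : ℝ) - k)) := by
    rw [hc, ← rpow_mul (by norm_num : (0:ℝ) ≤ 2)]
    congr 1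
    ring
  have hpm1 : p - 1 = 1 / β := by
    rw [hp]; field_simp [hβ]; linarith
  have h2β : (1 : ℝ) ≤ (2 / β) ^ p := by
    apply one_le_rpow _ (by linarith)
    rw [le_div_iff₀ hβ0]; linarith
  have hfinal : 2 ^ (p - 1) * (c ^ p + d ^ p) ≤
      2 ^ (1 / β) * (2 / β) ^ p * (2 ^ (-p * ((l : ℝ) - k)) + lam ^ (-γ)) := by
    rw [hpm1, hdp, ← hcp]
    have hcpos : (0 : ℝ) < c ^ p := rpow_pos_of_pos hc0 _
    have h2pos : (0 : ℝ) < (2 : ℝ) ^ (1 / β) := rpow_pos_of_pos two_pos _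
    have hlpos : (0 : ℝ) < lam ^ (-γ) := rpow_pos_of_pos hlam _
    nlinarith [mul_pos h2pos hcpos]
  calc ((β / 2 * c * t + 1) / (β / 2 * t + 1)) ^ p ≤ (c + d) ^ p := step2
    _ ≤ 2 ^ (p - 1) * (c ^ p + d ^ p) := step3
    _ ≤ _ := hfinal
end

section
/- Let γ ∈ (1,2] and define ũ(b,0+) = c·b^{−1/(γ−1)} for some constant c ≥ 0 and all b > 0, and suppose ũ satisfies the flow relation ũ(a,0+) = u(a−b, ũ(b,0+)) for all 0 < b < a, where u(t,λ) = ((γ−1)t + λ^{−(γ−1)})^{−1/(γ−1)}. If c > 0, then ũ(a,0+) = ((γ−1)a)^{−1/(γ−1)} for all a > 0. -/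
open Real

/-- If `ũ(b) = c·b^{−1/(γ−1)}` with `c > 0` satisfies the flow relation
`ũ(a) = u(a−b, ũ(b))` for all `0 < b < a`, then `ũ(a) = ((γ−1)a)^{−1/(γ−1)}`. -/
theorem stmt_17 (γ : ℝ) (hγ₁ : 1 < γ) (hγ₂ : γ ≤ 2)
    (u : ℝ → ℝ → ℝ)
    (hu : ∀ t l : ℝ, u t l = ((γ - 1) * t + l ^ (-(γ - 1))) ^ (-(1 / (γ - 1))))
    (c : ℝ) (hc : 0 < c) (v : ℝ → ℝ)
    (hv : ∀ b : ℝ, 0 < b → v b = c * b ^ (-(1 / (γ - 1))))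
    (hflow : ∀ a b : ℝ, 0 < b → b < a → v a = u (a - b) (v b)) :
    ∀ a : ℝ, 0 < a → v a = ((γ - 1) * a) ^ (-(1 / (γ - 1))) := by
  set β := γ - 1 with hβdef
  have hβ : 0 < β := by simp [hβdef]; linarith
  set e : ℝ := -(1 / β) with hedef
  have hmul : e * -β = 1 := by
    rw [hedef, neg_mul_neg, one_div, inv_mul_cancel₀ hβ.ne']
  have hcb : 0 < c ^ (-β) := Real.rpow_pos_of_pos hc _
  -- Step 1: c ^ (-β) = β
  have hkey : c ^ (-β) = β := by
    have h1 := hflow 2 1 one_pos one_lt_two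
    rw [hu, hv 2 two_pos, hv 1 one_pos] at h1
    rw [Real.one_rpow, mul_one] at h1
    have hl : c * (2:ℝ) ^ e = (c ^ (-β) * 2) ^ e := by
      rw [Real.mul_rpow hcb.le (by norm_num), ← Real.rpow_mul hc.le]
      rw [show -β * e = 1 by rw [mul_comm]; exact hmul, Real.rpow_one]
    rw [hl] at h1
    have h2 : ((c ^ (-β) * 2) ^ e) ^ (-β) = ((β * (2 - 1) + c ^ (-β)) ^ e) ^ (-β) := by
      rw [h1]
    rw [← Real.rpow_mul (by positivity), ← Real.rpow_mul (by positivity),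
      hmul, Real.rpow_one, Real.rpow_one] at h2
    linarith
  intro a ha
  have h2 := hflow a (a / 2) (half_pos ha) (half_lt_self ha)
  rw [hu, hv (a / 2) (half_pos ha)] at h2
  have h3 : (c * (a / 2) ^ e) ^ (-β) = β * (a / 2) := by
    rw [Real.mul_rpow hc.le (Real.rpow_nonneg (by positivity) _),
      ← Real.rpow_mul (by positivity), hmul, Real.rpow_one, hkey]
  rw [h3] at h2
  rw [h2]
  congr 1
  ring
end
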